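/- arXiv:2109.07887 — 2 statements merged into one kernel-verified Lean document; each statement's English description precedes it below -/
import Mathlib

section
/- Every finitely generated subgroup Γ of GL(n, ℂ) is residually finite; equivalently, the intersection of all finite-index normal subgroups of Γ is trivial. -/
set_option synthInstance.maxHeartbeats 1000000
set_option maxHeartbeats 1600000

lemma malcev_aux_jacobson_int : IsJacobsonRing ℤ := by
  rw [isJacobsonRing_iff_prime_eq]
  intro P hP
  rcases eq_or_ne P ⊥ with rfl | hbot
  · refine le_antisymm ?_ Ideal.le_jacobson
    intro x hx
    rw [Ideal.mem_jacobson_bot] at hx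
    have h1 := hx 1
    have h2 := hx (-1)
    rw [Int.isUnit_iff] at h1 h2
    simp only [Ideal.mem_bot]
    omega
  · haveI := @IsPrime.to_maximal_ideal ℤ _ _ _ P hP hbot
    exact Ideal.jacobson_eq_self_of_isMaximal

lemma malcev_aux_field_finite (k : Type*) [Field k] [Module.Finite ℤ k] : Finite k := by
  obtain ⟨p, hp⟩ := CharP.exists k
  rcases CharP.char_is_prime_or_zero k p with hprime | hzero
  · haveI : AddGroup.FG k := Module.Finite.iff_addGroup_fg.mp ‹_›
    refine AddCommGroup.finite_of_fg_torsion k (fun x => ?_)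
    refine isOfFinAddOrder_iff_nsmul_eq_zero.mpr ⟨p, hprime.pos, ?_⟩
    rw [nsmul_eq_mul, CharP.cast_eq_zero k p, zero_mul]
  · subst hzero
    haveI : CharZero k := CharP.charP_to_charZero k
    haveI : Algebra.IsIntegral ℤ k := Algebra.IsIntegral.of_finite ℤ k
    have hint : IsIntegral ℤ ((Rat.castHom k).toIntAlgHom ((1 : ℚ)/2)) :=
      Algebra.IsIntegral.isIntegral _
    rw [isIntegral_algHom_iff _ (RingHom.injective _)] at hint
    obtain ⟨y, hy⟩ := IsIntegrallyClosed.isIntegral_iff.mp hint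
    have : (y : ℚ) = 1/2 := hy
    have : (2 : ℚ) * y = 1 := by rw [this]; ring
    norm_cast at this
    omega

lemma malcev_aux_maximal (R : Type*) [CommRing R] [IsDomain R] [IsJacobsonRing R]
    {a : R} (ha : a ≠ 0) : ∃ m : Ideal R, m.IsMaximal ∧ a ∉ m := by
  by_contra h
  push_neg at h
  have hbot : (⊥ : Ideal R).jacobson = ⊥ :=
    IsJacobsonRing.out' ⊥ (Ideal.bot_prime.isRadical)
  have : a ∈ (⊥ : Ideal R).jacobson := by
    rw [Ideal.jacobson]
    exact Ideal.mem_sInf.mpr (fun {J} hJ => h J hJ.2)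
  rw [hbot, Ideal.mem_bot] at this
  exact ha this
lemma malcev_aux_detect (R : Subalgebra ℤ ℂ) (hfg : R.FG) {a : R} (ha : a ≠ 0) :
    ∃ (k : Type) (_ : CommRing k) (_ : Finite k) (φ : R →+* k), φ a ≠ 0 := by
  haveI : Algebra.FiniteType ℤ R := (Subalgebra.fg_iff_finiteType R).mp hfg
  haveI := malcev_aux_jacobson_int
  haveI : IsJacobsonRing R := isJacobsonRing_of_finiteType (A := ℤ)
  obtain ⟨m, hm, ham⟩ := malcev_aux_maximal R ha
  haveI := hm
  haveI : Algebra.FiniteType ℤ (R ⧸ m) :=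
    Algebra.FiniteType.of_surjective
      (Ideal.Quotient.mkₐ ℤ m) (Ideal.Quotient.mkₐ_surjective ℤ m)
  have hfin : Finite (R ⧸ m) := by
    letI F : Field (R ⧸ m) := Ideal.Quotient.field m
    haveI : Module.Finite ℤ (R ⧸ m) := finite_of_finite_type_of_isJacobsonRing ℤ (R ⧸ m)
    exact malcev_aux_field_finite (R ⧸ m)
  exact ⟨R ⧸ m, inferInstance, hfin, Ideal.Quotient.mk m,
    by rw [Ne, Ideal.Quotient.eq_zero_iff_mem]; exact ham⟩


/-- **Malcev's theorem.** Every finitely generated subgroup `Γ` of `GL(n, ℂ)`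
(presented here as a finitely generated group with a faithful representation
into `GL(n, ℂ)`) is residually finite; equivalently, the intersection of all
finite-index normal subgroups of `Γ` is trivial. -/
theorem malcev_residually_finite
    (Γ : Type) [Group Γ] (hfg : Group.FG Γ) (n : ℕ)
    (ρ : Γ →* Matrix.GeneralLinearGroup (Fin n) ℂ)
    (hinj : Function.Injective ρ) :
    (∀ g : Γ, g ≠ 1 → ∃ N : Subgroup Γ, N.Normal ∧ N.FiniteIndex ∧ g ∉ N) ∧
    (⨅ (N : Subgroup Γ) (_ : N.Normal) (_ : N.FiniteIndex), N) = ⊥ := by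
  have key : ∀ g : Γ, g ≠ 1 → ∃ N : Subgroup Γ, N.Normal ∧ N.FiniteIndex ∧ g ∉ N := by
    intro g hg
    obtain ⟨S, hSgen, hSfin⟩ := Group.fg_iff.mp hfg
    set T : Set ℂ := (fun q : Γ × (Fin n × Fin n) × Bool =>
        if q.2.2 then (ρ q.1).val q.2.1.1 q.2.1.2
        else ((ρ q.1)⁻¹).val q.2.1.1 q.2.1.2) ''
      (S ×ˢ Set.univ) with hT
    have hTfin : T.Finite := (hSfin.prod Set.finite_univ).image _
    set R := Algebra.adjoin ℤ T with hR
    have hRfg : R.FG := Subalgebra.fg_def.mpr ⟨T, hTfin, rfl⟩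
    -- the subgroup of elements whose matrix entries (and inverse entries) lie in R
    let P : Subgroup Γ :=
      { carrier := {x | ∀ i j, ((ρ x).val i j ∈ R) ∧ (((ρ x)⁻¹).val i j ∈ R)}
        one_mem' := by
          intro i j
          simp only [map_one, inv_one, Units.val_one, Matrix.one_apply]
          constructor <;> split <;>
            first | exact Subalgebra.one_mem R | exact Subalgebra.zero_mem R
        mul_mem' := by
          intro a b ha hb i j
          constructor
          · rw [map_mul, Units.val_mul, Matrix.mul_apply]
            exact Subalgebra.sum_mem R fun k _ => Subalgebra.mul_mem R (ha i k).1 (hb k j).1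
          · rw [map_mul, mul_inv_rev, Units.val_mul, Matrix.mul_apply]
            exact Subalgebra.sum_mem R fun k _ => Subalgebra.mul_mem R (hb i k).2 (ha k j).2
        inv_mem' := by
          intro x hx i j
          rw [map_inv, inv_inv]
          exact ⟨(hx i j).2, (hx i j).1⟩ }
    have hP : ∀ x : Γ, x ∈ P := by
      have hle : Subgroup.closure S ≤ P := by
        rw [Subgroup.closure_le]
        intro s hs
        intro i j
        constructor
        · exact Algebra.subset_adjoin ⟨(s, (i, j), true), Set.mk_mem_prod hs trivial, rfl⟩
        · exact Algebra.subset_adjoin ⟨(s, (i, j), false), Set.mk_mem_prod hs trivial, rfl⟩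
      intro x
      exact hle (hSgen ▸ Subgroup.mem_top x)
    -- the representation over R
    let ι : Matrix (Fin n) (Fin n) R →+* Matrix (Fin n) (Fin n) ℂ :=
      (Subalgebra.val R).toRingHom.mapMatrix
    have hι_inj : Function.Injective ι := by
      intro A B h
      ext i j
      exact congrFun (congrFun h i) j
    let f0 : Γ → Matrix (Fin n) (Fin n) R := fun x =>
      Matrix.of fun i j => (⟨(ρ x).val i j, (hP x i j).1⟩ : R)
    have hf0 : ∀ x, ι (f0 x) = (ρ x).val := by
      intro x; ext i j; rfl
    let f : Γ →* Matrix (Fin n) (Fin n) R :=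
      { toFun := f0
        map_one' := hι_inj (by rw [hf0, map_one, map_one, Units.val_one])
        map_mul' := fun a b => hι_inj
          (by rw [hf0, map_mul, map_mul, hf0, hf0, Units.val_mul]) }
    have hf : ∀ x, ι (f x) = (ρ x).val := hf0
    -- a nonzero element of R detecting g
    have hfg1 : f g ≠ 1 := by
      intro h
      apply hg
      apply hinj
      rw [map_one]
      apply Units.ext
      rw [Units.val_one, ← hf g, h, map_one]
    have hex : ∃ i j, f g i j ≠ (1 : Matrix (Fin n) (Fin n) R) i j := by
      by_contra h
      push_neg at h
      exact hfg1 (Matrix.ext h)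
    obtain ⟨i, j, hij⟩ := hex
    have ha : f g i j - (1 : Matrix (Fin n) (Fin n) R) i j ≠ 0 := sub_ne_zero.mpr hij
    obtain ⟨k, _, _, φ, hφ⟩ := malcev_aux_detect R hRfg ha
    haveI : Finite (Matrix (Fin n) (Fin n) k) := inferInstance
    let ψ : Γ →* Matrix (Fin n) (Fin n) k := (φ.mapMatrix.toMonoidHom).comp f
    let ψ' : Γ →* (Matrix (Fin n) (Fin n) k)ˣ := ψ.toHomUnits
    haveI : Finite ((Matrix (Fin n) (Fin n) k)ˣ) := inferInstance
    refine ⟨ψ'.ker, MonoidHom.normal_ker ψ', inferInstance, ?_⟩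
    intro hgN
    rw [MonoidHom.mem_ker] at hgN
    have hψ : ψ g = 1 := by
      have h1 := congrArg Units.val hgN
      rw [Units.val_one] at h1
      rw [← MonoidHom.coe_toHomUnits ψ g]
      exact h1
    have hentry : φ (f g i j) = φ ((1 : Matrix (Fin n) (Fin n) R) i j) := by
      have h1 : φ.mapMatrix (f g) = φ.mapMatrix (1 : Matrix (Fin n) (Fin n) R) := by
        rw [map_one]; exact hψ
      exact congrFun (congrFun h1 i) j
    apply hφ
    rw [map_sub, hentry, sub_self]
  refine ⟨key, ?_⟩
  rw [eq_bot_iff]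
  intro g hg
  rw [Subgroup.mem_bot]
  by_contra hne
  obtain ⟨N, hN1, hN2, hgN⟩ := key g hne
  exact hgN (Subgroup.mem_iInf.mp (Subgroup.mem_iInf.mp (Subgroup.mem_iInf.mp hg N) hN1) hN2)
end

section
/- Every finitely generated subgroup of GL(n, ℂ) contains a torsion-free subgroup of finite index. -/
set_option maxHeartbeats 1000000
set_option synthInstance.maxHeartbeats 400000
instance : IsJacobsonRing ℤ := by
  rw [isJacobsonRing_iff_prime_eq]
  intro P hP
  by_cases hbot : P = ⊥
  · subst hbot
    refine le_antisymm ?_ Ideal.le_jacobson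
    intro x hx
    rw [Ideal.mem_jacobson_bot] at hx
    have h1 := hx 1
    have h2 := hx (-1)
    rw [mul_one] at h1
    rw [Int.isUnit_iff] at h1 h2
    simp only [Ideal.mem_bot]
    omega
  · exact Ideal.jacobson_eq_self_of_isMaximal (H := hP.isMaximal hbot)

theorem residue_finite (A : Type) [CommRing A] [Algebra.FiniteType ℤ A]
    (m : Ideal A) [m.IsMaximal] :
    Finite (A ⧸ m) ∧ ∃ p : ℕ, p.Prime ∧ (p : A) ∈ m := by
  let F := A ⧸ m
  letI : Field F := Ideal.Quotient.field m
  haveI : Algebra.FiniteType ℤ F :=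
    Algebra.FiniteType.of_surjective
      (Ideal.Quotient.mkₐ ℤ m) (Ideal.Quotient.mkₐ_surjective ℤ m)
  haveI : Module.Finite ℤ F := finite_of_finite_type_of_isJacobsonRing ℤ F
  haveI : Algebra.IsIntegral ℤ F := Algebra.IsIntegral.of_finite ℤ F
  have hker : (RingHom.ker (algebraMap ℤ F)).IsMaximal := by
    haveI : (⊥ : Ideal F).IsMaximal := Ideal.bot_isMaximal
    have := Ideal.isMaximal_comap_of_isIntegral_of_isMaximal' (algebraMap ℤ F)
      (Algebra.isIntegral_def.mp inferInstance) ⊥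
    simpa [← RingHom.ker_eq_comap_bot] using this
  have hnotbot : RingHom.ker (algebraMap ℤ F) ≠ ⊥ := by
    intro h
    rw [h] at hker
    have : IsField ℤ := by
      have h2 := (Ideal.Quotient.maximal_ideal_iff_isField_quotient (⊥ : Ideal ℤ)).mp hker
      exact MulEquiv.isField h2 (RingEquiv.quotientBot ℤ).symm.toMulEquiv
    exact Int.not_isField this
  have hc : ringChar F ≠ 0 := by
    intro h0
    haveI : CharP F 0 := h0 ▸ ringChar.charP F
    haveI : CharZero F := CharP.charP_to_charZero F
    apply hnotbot
    rw [eq_bot_iff]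
    intro x hx
    have hx' : algebraMap ℤ F x = 0 := hx
    have : (x : F) = 0 := by simpa [algebraMap_int_eq, eq_intCast] using hx'
    simpa using Int.cast_injective (α := F) (this.trans (Int.cast_zero).symm)
  haveI : CharP F (ringChar F) := ringChar.charP F
  have hp : (ringChar F).Prime := CharP.char_prime_of_ne_zero F hc
  haveI : NeZero (ringChar F) := ⟨hc⟩
  letI : Algebra (ZMod (ringChar F)) F := ZMod.algebra F (ringChar F)
  haveI : Module.Finite (ZMod (ringChar F)) F :=
    Module.Finite.of_restrictScalars_finite ℤ (ZMod (ringChar F)) F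
  haveI : Finite (ZMod (ringChar F)) := by
    haveI : Fact (ringChar F).Prime := ⟨hp⟩
    infer_instance
  have hfin : Finite F := Module.finite_of_finite (ZMod (ringChar F))
  refine ⟨hfin, ringChar F, hp, ?_⟩
  have : ((ringChar F : A) : F) = 0 := by
    exact CharP.cast_eq_zero F _
  exact (Ideal.Quotient.eq_zero_iff_mem).mp this

theorem selberg_key {Γ : Type} [Group Γ] {n : ℕ}
    (ρ : Γ →* Matrix.GeneralLinearGroup (Fin n) ℂ) (hinj : Function.Injective ρ)
    (A : Type) [CommRing A] [IsDomain A] [Algebra.FiniteType ℤ A]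
    (f : A →+* ℂ) (hf : Function.Injective f)
    (Mf : Γ → Matrix (Fin n) (Fin n) A)
    (hMf : ∀ g, (Mf g).map f = ((ρ g : Matrix (Fin n) (Fin n) ℂ))) :
    ∃ (H : Subgroup Γ) (p : ℕ), p.Prime ∧ ¬ IsUnit ((p : ℕ) : A) ∧ H.FiniteIndex ∧
      ∀ g ∈ H, ∀ q : ℕ, q.Prime → q ≠ p → g ^ q = 1 → g = 1 := by
  classical
  haveI : IsNoetherianRing A := Algebra.FiniteType.isNoetherianRing ℤ A
  obtain ⟨m, hm⟩ := Ideal.exists_maximal A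
  haveI := hm
  obtain ⟨hfinF, p, hp, hpm⟩ := residue_finite A m
  let ι : Matrix (Fin n) (Fin n) A →+* Matrix (Fin n) (Fin n) ℂ := f.mapMatrix
  have hι : Function.Injective ι := by
    intro P Q h
    ext i j
    exact hf (Matrix.ext_iff.mpr h i j)
  have hιM : ∀ g, ι (Mf g) = ((ρ g : Matrix (Fin n) (Fin n) ℂ)) := hMf
  have hone : Mf 1 = 1 := by
    apply hι
    rw [hιM, map_one ρ, Units.val_one, map_one]
  have hmul : ∀ g h : Γ, Mf (g * h) = Mf g * Mf h := by
    intro g h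
    apply hι
    rw [map_mul, hιM, hιM, hιM, map_mul ρ, Units.val_mul]
  let M : Γ →* Matrix (Fin n) (Fin n) A := ⟨⟨Mf, hone⟩, hmul⟩
  let π : Matrix (Fin n) (Fin n) A →+* Matrix (Fin n) (Fin n) (A ⧸ m) :=
    (Ideal.Quotient.mk m).mapMatrix
  have hval : ∀ g : Γ, π (Mf g) * π (Mf g⁻¹) = 1 := by
    intro g
    rw [← map_mul, ← hmul, mul_inv_cancel, hone, map_one]
  have hval' : ∀ g : Γ, π (Mf g⁻¹) * π (Mf g) = 1 := by
    intro g
    rw [← map_mul, ← hmul, inv_mul_cancel, hone, map_one]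
  let φ : Γ →* (Matrix (Fin n) (Fin n) (A ⧸ m))ˣ :=
    { toFun := fun g => ⟨π (Mf g), π (Mf g⁻¹), hval g, hval' g⟩
      map_one' := by ext; simp [hone]
      map_mul' := by intro g h; ext; simp [hmul] }
  haveI : Finite (A ⧸ m) := hfinF
  haveI : Finite (Matrix (Fin n) (Fin n) (A ⧸ m)) :=
    inferInstanceAs (Finite (Fin n → Fin n → (A ⧸ m)))
  haveI : φ.ker.FiniteIndex := Subgroup.finiteIndex_ker φ
  refine ⟨φ.ker, p, hp, ?_, inferInstance, ?_⟩
  · intro hu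
    exact hm.ne_top (m.eq_top_of_isUnit_mem hpm hu)
  intro g hg q hq hqp hgq
  by_contra hgne
  -- q is not in m
  have hqm : ((q : ℕ) : A) ∉ m := by
    intro hqmem
    have hco : IsCoprime (q : ℤ) (p : ℤ) :=
      Int.isCoprime_iff_gcd_eq_one.mpr (by
        simpa [Int.gcd] using (Nat.coprime_primes hq hp).mpr hqp)
    obtain ⟨a, b, hab⟩ := hco
    have h1m : (1 : A) ∈ m := by
      have hmm := m.add_mem (m.mul_mem_left ((a : A)) hqmem)
        (m.mul_mem_left ((b : A)) hpm)
      have hcast : ((a * q + b * p : ℤ) : A) = (1 : A) := by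
        rw [hab]; push_cast; ring
      push_cast at hcast
      rwa [hcast] at hmm
    exact hm.ne_top ((Ideal.eq_top_iff_one m).mpr h1m)
  -- entries of X = M g - 1 lie in m
  set X : Matrix (Fin n) (Fin n) A := Mf g - 1 with hXdef
  have hXmem : ∀ i j, X i j ∈ m := by
    intro i j
    have h1 : π (Mf g) = 1 := congrArg Units.val hg
    rw [← Ideal.Quotient.eq_zero_iff_mem]
    have h3 : Ideal.Quotient.mk m (Mf g i j)
        = Ideal.Quotient.mk m ((1 : Matrix (Fin n) (Fin n) A) i j) := by
      have h2 := Matrix.ext_iff.mpr h1 i j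
      have h4 := Matrix.ext_iff.mpr (map_one π).symm i j
      exact h2.trans h4
    simp only [hXdef, Matrix.sub_apply, map_sub, h3, sub_self]
  have hX0 : X ≠ 0 := by
    intro h0
    apply hgne
    apply hinj
    apply Units.ext
    have hMg1 : Mf g = 1 := by rwa [hXdef, sub_eq_zero] at h0
    have h2 : ι (Mf g) = ι 1 := by rw [hMg1]
    rw [hιM, map_one] at h2
    rw [h2, map_one ρ, Units.val_one]
  -- powers of X have entries in powers of m
  have hpow : ∀ (l k : ℕ), (∀ i j, X i j ∈ m ^ k) → ∀ i j, (X ^ l) i j ∈ m ^ (l * k) := by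
    intro l k hX
    induction l with
    | zero => intro i j; simpa using Submodule.mem_top
    | succ l ih =>
        intro i j
        rw [pow_succ, Matrix.mul_apply]
        apply Ideal.sum_mem
        intro c _
        have hsplit : m ^ ((l + 1) * k) = m ^ (l * k) * m ^ k := by
          rw [← pow_add, add_mul, one_mul]
        rw [hsplit]
        exact Ideal.mul_mem_mul (ih i c) (hX c j)
  -- find the critical exponent
  have hKrull : (⨅ i : ℕ, m ^ i) = ⊥ := Ideal.iInf_pow_eq_bot_of_isDomain m hm.ne_top
  obtain ⟨i0, j0, hx0⟩ : ∃ i j, X i j ≠ 0 := by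
    by_contra h
    push_neg at h
    exact hX0 (by ext i j; simpa using h i j)
  have hex : ∃ N, ¬ ∀ i j, X i j ∈ m ^ N := by
    by_contra hall
    push_neg at hall
    apply hx0
    have hmem' : X i0 j0 ∈ (⨅ i : ℕ, m ^ i) :=
      Submodule.mem_iInf _ |>.mpr fun N => hall N i0 j0
    rw [hKrull] at hmem'
    simpa using hmem'
  set N := Nat.find hex with hNdef
  have hNspec : ¬ ∀ i j, X i j ∈ m ^ N := Nat.find_spec hex
  have hN0 : N ≠ 0 := by
    intro h
    exact hNspec (by rw [h]; intro i j; simpa using Submodule.mem_top)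
  have hN1 : N ≠ 1 := by
    intro h
    exact hNspec (by rw [h]; intro i j; simpa using hXmem i j)
  set k := N - 1 with hkdef
  have hk1 : 1 ≤ k := by omega
  have hkN : k + 1 = N := by omega
  have hPk : ∀ i j, X i j ∈ m ^ k := by
    have := Nat.find_min hex (show k < N by omega)
    exact not_not.mp this
  -- the binomial expansion
  have hMgq : (X + 1) ^ q = 1 := by
    have hmq : Mf (g ^ q) = (Mf g) ^ q := map_pow M g q
    rw [hgq] at hmq
    rw [hone] at hmq
    rw [hXdef, sub_add_cancel]
    exact hmq.symm
  have hsum : ∑ l ∈ Finset.range (q + 1),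
      X ^ l * ((q.choose l : ℕ) : Matrix (Fin n) (Fin n) A) = 1 := by
    rw [← hMgq, Commute.add_pow (Commute.one_right X)]
    apply Finset.sum_congr rfl
    intro l _
    rw [one_pow, mul_one]
  have hsum' : ∑ l ∈ Finset.range (q + 1), (q.choose l) • X ^ l = 1 := by
    rw [← hsum]
    apply Finset.sum_congr rfl
    intro l _
    rw [← (Nat.cast_commute (q.choose l) (X ^ l)).eq, ← nsmul_eq_mul]
  obtain ⟨r, rfl⟩ : ∃ r, q = r + 2 := ⟨q - 2, by have := hq.two_le; omega⟩
  have hpeel : ((r + 2).choose 1) • X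
      = - ∑ l ∈ Finset.range (r + 1), ((r + 2).choose (l + 2)) • X ^ (l + 2) := by
    rw [Finset.sum_range_succ'] at hsum'
    simp only [zero_add, pow_zero, Nat.choose_zero_right, one_smul] at hsum'
    rw [add_eq_right] at hsum'
    rw [Finset.sum_range_succ'] at hsum'
    simp only [zero_add, pow_one] at hsum'
    exact eq_neg_of_add_eq_zero_right hsum'
  have hq_entry : ∀ i j, (((r + 2 : ℕ)) : A) * X i j ∈ m ^ (k + 1) := by
    intro i j
    have h3 := Matrix.ext_iff.mpr hpeel i j
    rw [Nat.choose_one_right] at h3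
    have hl : ((r + 2) • X) i j = (((r + 2 : ℕ)) : A) * X i j := by
      rw [Matrix.smul_apply, nsmul_eq_mul]
    rw [hl] at h3
    rw [h3, Matrix.neg_apply, Matrix.sum_apply]
    apply Submodule.neg_mem
    apply Ideal.sum_mem
    intro l _
    rw [Matrix.smul_apply, nsmul_eq_mul]
    apply Ideal.mul_mem_left
    have hentry := hpow (l + 2) k hPk i j
    exact Ideal.pow_le_pow_right (by nlinarith) hentry
  have hprimary : (m ^ (k + 1)).IsPrimary := by
    apply Ideal.isPrimary_of_isMaximal_radical
    rw [Ideal.radical_pow m (by omega : k + 1 ≠ 0), hm.isPrime.radical]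
    exact hm
  have hfinal : ∀ i j, X i j ∈ m ^ (k + 1) := by
    intro i j
    have hmul' : X i j * (((r + 2 : ℕ)) : A) ∈ m ^ (k + 1) := by
      rw [mul_comm]; exact hq_entry i j
    rcases (Ideal.isPrimary_iff.mp hprimary).2 hmul' with h | h
    · exact h
    · exact absurd (by rwa [Ideal.radical_pow m (by omega : k + 1 ≠ 0), hm.isPrime.radical] at h) hqm
  exact hNspec (fun i j => hkN ▸ hfinal i j)

/-- **Selberg's lemma.** Every finitely generated subgroup of `GL(n, ℂ)`
(presented as a finitely generated group with a faithful representation into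
`GL(n, ℂ)`) contains a torsion-free subgroup of finite index. -/
theorem selberg_torsion_free_finite_index
    (Γ : Type) [Group Γ] (hfg : Group.FG Γ) (n : ℕ)
    (ρ : Γ →* Matrix.GeneralLinearGroup (Fin n) ℂ)
    (hinj : Function.Injective ρ) :
    ∃ H : Subgroup Γ, H.FiniteIndex ∧ ∀ g ∈ H, IsOfFinOrder g → g = 1 := by
  classical
  obtain ⟨S, hS⟩ := hfg.out
  let S' : Finset Γ := S ∪ S.image (·⁻¹)
  let T : Finset ℂ := S'.biUnion (fun s =>
    Finset.image (fun pq : Fin n × Fin n =>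
      ((ρ s : Matrix (Fin n) (Fin n) ℂ)) pq.1 pq.2) Finset.univ)
  have hmemgen : ∀ (R : Subalgebra ℤ ℂ), (↑T : Set ℂ) ⊆ ↑R →
      ∀ (g : Γ) (i j : Fin n), ((ρ g : Matrix (Fin n) (Fin n) ℂ)) i j ∈ R := by
    intro R hTR g
    have hgmem : g ∈ Submonoid.closure ((↑S' : Set Γ) ∪ (↑S' : Set Γ)⁻¹) := by
      have h1 : g ∈ Subgroup.closure (↑S' : Set Γ) := by
        have hle : Subgroup.closure (↑S : Set Γ) ≤ Subgroup.closure (↑S' : Set Γ) :=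
          Subgroup.closure_mono (fun x hx => Finset.mem_coe.mpr
            (Finset.mem_union_left _ (Finset.mem_coe.mp hx)))
        exact hle (hS ▸ Subgroup.mem_top g)
      rw [← Subgroup.closure_toSubmonoid (↑S' : Set Γ)]
      exact h1
    refine Submonoid.closure_induction
      (motive := fun x _ => ∀ i j, ((ρ x : Matrix (Fin n) (Fin n) ℂ)) i j ∈ R)
      ?_ ?_ ?_ hgmem
    · intro x hx i j
      have hx' : x ∈ S' := by
        rcases hx with hx | hx
        · exact Finset.mem_coe.mp hx
        · have hxi : x⁻¹ ∈ S' := Finset.mem_coe.mp (Set.mem_inv.mp hx |> fun h => by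
            simpa using h)
          rcases Finset.mem_union.mp hxi with h2 | h2
          · exact Finset.mem_union_right _ (Finset.mem_image.mpr ⟨x⁻¹, h2, inv_inv x⟩)
          · obtain ⟨s, hs, hsx⟩ := Finset.mem_image.mp h2
            have : x = s := by
              have := congrArg (·⁻¹) hsx
              simpa using this.symm
            rw [this]
            exact Finset.mem_union_left _ hs
      apply hTR
      exact Finset.mem_coe.mpr (Finset.mem_biUnion.mpr ⟨x, hx',
        Finset.mem_image.mpr ⟨(i, j), Finset.mem_univ _, rfl⟩⟩)
    · intro i j
      rw [map_one ρ, Units.val_one, Matrix.one_apply]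
      split_ifs
      · exact one_mem R
      · exact zero_mem R
    · intro x y _ _ ihx ihy i j
      rw [map_mul ρ, Units.val_mul, Matrix.mul_apply]
      exact Subalgebra.sum_mem R (fun c _ => mul_mem (ihx i c) (ihy c j))
  -- first ring
  let R₀ : Subalgebra ℤ ℂ := Algebra.adjoin ℤ (↑T : Set ℂ)
  haveI hft₀ : Algebra.FiniteType ℤ R₀ :=
    (Subalgebra.fg_iff_finiteType R₀).mp (Subalgebra.fg_adjoin_finset T)
  have hmem₀ := hmemgen R₀ Algebra.subset_adjoin
  obtain ⟨H₀, p₀, hp₀, hpu₀, hfi₀, htor₀⟩ := selberg_key ρ hinj R₀ R₀.val.toRingHom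
    Subtype.val_injective
    (fun g => Matrix.of fun i j => (⟨_, hmem₀ g i j⟩ : R₀))
    (fun g => by ext i j; rfl)
  -- second ring, inverting p₀
  let c : ℂ := ((p₀ : ℂ))⁻¹
  let R₁ : Subalgebra ℤ ℂ := Algebra.adjoin ℤ (insert c (↑T : Set ℂ))
  haveI hft₁ : Algebra.FiniteType ℤ R₁ :=
    (Subalgebra.fg_iff_finiteType R₁).mp
      (Subalgebra.fg_def.mpr ⟨insert c ↑T, (T.finite_toSet.insert c), rfl⟩)
  have hmem₁ := hmemgen R₁ (fun x hx => Algebra.subset_adjoin (Set.mem_insert_of_mem c hx))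
  obtain ⟨H₁, p₁, hp₁, hpu₁, hfi₁, htor₁⟩ := selberg_key ρ hinj R₁ R₁.val.toRingHom
    Subtype.val_injective
    (fun g => Matrix.of fun i j => (⟨_, hmem₁ g i j⟩ : R₁))
    (fun g => by ext i j; rfl)
  have hne : p₁ ≠ p₀ := by
    intro h
    apply hpu₁
    rw [h]
    have hcmem : c ∈ R₁ := Algebra.subset_adjoin (Set.mem_insert c _)
    refine isUnit_iff_exists_inv.mpr ⟨⟨c, hcmem⟩, ?_⟩
    apply Subtype.ext
    show ((p₀ : ℕ) : ℂ) * c = 1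
    exact mul_inv_cancel₀ (Nat.cast_ne_zero.mpr hp₀.pos.ne') 
  haveI := hfi₀
  haveI := hfi₁
  refine ⟨H₀ ⊓ H₁, inferInstance, ?_⟩
  intro g hg hford
  by_contra hgne
  set d := orderOf g with hddef
  have hd1 : d ≠ 1 := fun h => hgne (orderOf_eq_one_iff.mp h)
  set q := d.minFac with hqdef
  have hq : q.Prime := Nat.minFac_prime hd1
  set h := g ^ (d / q) with hhdef
  have hhmem : h ∈ H₀ ⊓ H₁ := Subgroup.pow_mem _ hg _
  have hhq : h ^ q = 1 := by
    rw [hhdef, ← pow_mul, Nat.div_mul_cancel (Nat.minFac_dvd d), hddef, pow_orderOf_eq_one]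
  have hhne : h ≠ 1 := by
    intro hcon
    have hdvd : d ∣ d / q := orderOf_dvd_of_pow_eq_one hcon
    have hlt : d / q < d := Nat.div_lt_self hford.orderOf_pos hq.one_lt
    have hpos : 0 < d / q := Nat.div_pos (Nat.minFac_le hford.orderOf_pos) hq.pos
    exact absurd (Nat.le_of_dvd hpos hdvd) (not_le.mpr hlt)
  rcases eq_or_ne q p₀ with h0 | h0
  · exact hhne (htor₁ h hhmem.2 q hq (fun he => hne (he ▸ h0)) hhq)
  · exact hhne (htor₀ h hhmem.1 q hq h0 hhq)
end
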